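/- If 0 = beta(x, w_1) = ... = beta(x, w_G) and treatment assignment is ignorable given x with aliasing by beta, then for any two groups g, g' the expected treatment effect satisfies E[r_g - r_{g'} | x] = E[R | Z_g = 1, x] - E[R | Z_{g'} = 1, x]. -/

import Mathlib

open MeasureTheory ProbabilityTheory

open MeasurableSpace in
/-- Conditional independence implies the conditional expectation of a product factors. -/
lemma condexp_mul_of_condIndepFun_aux
    {Ω : Type*} {m : MeasurableSpace Ω} [mΩ : MeasurableSpace Ω] [StandardBorelSpace Ω]
    (hm : m ≤ mΩ) (μ : Measure Ω) [IsProbabilityMeasure μ]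
    {f h : Ω → ℝ} (hCI : CondIndepFun m hm f h μ)
    (hf : Integrable f μ) (hh : Integrable h μ)
    (hfh : Integrable (fun ω => f ω * h ω) μ) :
    μ[fun ω => f ω * h ω | m] =ᵐ[μ] fun ω => (μ[f|m]) ω * (μ[h|m]) ω := by
  set κ := condExpKernel μ m with hκdef
  obtain ⟨f', hf'meas, hff'⟩ : ∃ f', StronglyMeasurable f' ∧ f =ᵐ[μ] f' :=
    ⟨hf.1.mk f, hf.1.stronglyMeasurable_mk, hf.1.ae_eq_mk⟩
  obtain ⟨h', hh'meas, hhh'⟩ : ∃ h', StronglyMeasurable h' ∧ h =ᵐ[μ] h' :=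
    ⟨hh.1.mk h, hh.1.stronglyMeasurable_mk, hh.1.ae_eq_mk⟩
  set N := {ω | f ω ≠ f' ω} ∪ {ω | h ω ≠ h' ω} with hNdef
  have hN : μ N = 0 := by
    apply measure_union_null
    · exact ae_iff.mp hff'
    · exact ae_iff.mp hhh'
  set E := toMeasurable μ N with hEdef
  have hEmeas : MeasurableSet E := measurableSet_toMeasurable μ N
  have hEnull : μ E = 0 := by rw [hEdef, measure_toMeasurable]; exact hN
  have hNE : N ⊆ E := subset_toMeasurable μ N
  -- a.e. ω, the kernel gives no mass to `E`
  have hE0 : ∀ᵐ ω ∂μ, κ ω E = 0 := by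
    have h1 : (fun ω => (κ ω E).toReal) =ᵐ[μ] μ⟦E|m⟧ := condExpKernel_ae_eq_condExp hm hEmeas
    have hind : E.indicator (fun _ => (1 : ℝ)) =ᵐ[μ] 0 := by
      filter_upwards [measure_eq_zero_iff_ae_notMem.mp hEnull] with ω hω
      simp [Set.indicator_of_notMem hω]
    have h2 : μ⟦E|m⟧ =ᵐ[μ] 0 := (condExp_congr_ae hind).trans (by rw [condExp_zero])
    filter_upwards [h1.trans h2] with ω hω
    have hne : κ ω E ≠ ⊤ := measure_ne_top _ _
    simpa [ENNReal.toReal_eq_zero_iff, hne] using hω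
  -- the rational-rays independence property, a.e.
  have hqq' : ∀ᵐ ω ∂μ, ∀ q q' : ℚ,
      κ ω (f ⁻¹' Set.Iic (q : ℝ) ∩ h ⁻¹' Set.Iic (q' : ℝ))
        = κ ω (f ⁻¹' Set.Iic (q : ℝ)) * κ ω (h ⁻¹' Set.Iic (q' : ℝ)) := by
    rw [ae_all_iff]
    intro q
    rw [ae_all_iff]
    intro q'
    exact ae_of_ae_trim hm
      (Kernel.IndepFun.measure_inter_preimage_eq_mul hCI _ _ measurableSet_Iic measurableSet_Iic)
  have key : ∀ᵐ ω ∂μ,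
      ∫ y, f y * h y ∂(κ ω) = (∫ y, f y ∂(κ ω)) * ∫ y, h y ∂(κ ω) := by
    filter_upwards [hE0, hqq', Integrable.condExpKernel_ae (m := m) hf,
      Integrable.condExpKernel_ae (m := m) hh] with ω hωE hωq hωf hωh
    have hnE : ∀ᵐ y ∂(κ ω), y ∉ E := by
      rw [ae_iff]
      simpa [not_not, Set.setOf_mem_eq] using hωE
    have hfe : f =ᵐ[κ ω] f' := by
      filter_upwards [hnE] with y hy
      by_contra hc
      exact hy (hNE (Or.inl hc))
    have hhe : h =ᵐ[κ ω] h' := by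
      filter_upwards [hnE] with y hy
      by_contra hc
      exact hy (hNE (Or.inr hc))
    -- transfer the rational-ray identities to the measurable versions
    have hsets : ∀ q q' : ℚ,
        κ ω (f' ⁻¹' Set.Iic (q : ℝ) ∩ h' ⁻¹' Set.Iic (q' : ℝ))
          = κ ω (f' ⁻¹' Set.Iic (q : ℝ)) * κ ω (h' ⁻¹' Set.Iic (q' : ℝ)) := by
      intro q q'
      have e1 : f ⁻¹' Set.Iic (q : ℝ) =ᵐ[κ ω] f' ⁻¹' Set.Iic (q : ℝ) := by
        filter_upwards [hfe] with y hy
        show (f y ∈ Set.Iic (q : ℝ)) = (f' y ∈ Set.Iic (q : ℝ))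
        rw [hy]
      have e2 : h ⁻¹' Set.Iic (q' : ℝ) =ᵐ[κ ω] h' ⁻¹' Set.Iic (q' : ℝ) := by
        filter_upwards [hhe] with y hy
        show (h y ∈ Set.Iic (q' : ℝ)) = (h' y ∈ Set.Iic (q' : ℝ))
        rw [hy]
      rw [← measure_congr e1, ← measure_congr e2, ← measure_congr (e1.inter e2)]
      exact hωq q q'
    have hIndep : IndepFun f' h' (κ ω) := by
      rw [IndepFun_iff_Indep]
      have hgen : ∀ (φ : Ω → ℝ), MeasurableSpace.comap φ inferInstance
          = generateFrom (Set.preimage φ '' (⋃ a : ℚ, {Set.Iic (a : ℝ)})) := by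
        intro φ
        have hb : (inferInstance : MeasurableSpace ℝ)
            = generateFrom (⋃ a : ℚ, {Set.Iic (a : ℝ)}) :=
          Real.borel_eq_generateFrom_Iic_rat
        rw [hb, comap_generateFrom]
      rw [hgen f', hgen h']
      refine IndepSets.indep' ?_ ?_ ?_ ?_ ((IndepSets_iff _ _ _).mpr ?_)
      · rintro _ ⟨t, ht, rfl⟩
        obtain ⟨a, rfl⟩ : ∃ a : ℚ, Set.Iic (a : ℝ) = t := by
          simpa [Set.mem_iUnion] using ht
        exact hf'meas.measurable measurableSet_Iic
      · rintro _ ⟨t, ht, rfl⟩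
        obtain ⟨a, rfl⟩ : ∃ a : ℚ, Set.Iic (a : ℝ) = t := by
          simpa [Set.mem_iUnion] using ht
        exact hh'meas.measurable measurableSet_Iic
      · exact (Real.isPiSystem_Iic_rat).comap f'
      · exact (Real.isPiSystem_Iic_rat).comap h'
      · rintro _ _ ⟨s, hs, rfl⟩ ⟨t, ht, rfl⟩
        obtain ⟨a, rfl⟩ : ∃ a : ℚ, Set.Iic (a : ℝ) = s := by
          simpa [Set.mem_iUnion] using hs
        obtain ⟨b, rfl⟩ : ∃ b : ℚ, Set.Iic (b : ℝ) = t := by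
          simpa [Set.mem_iUnion] using ht
        exact hsets a b
    have hfi' : Integrable f' (κ ω) := hωf.congr hfe
    have hhi' : Integrable h' (κ ω) := hωh.congr hhe
    calc ∫ y, f y * h y ∂(κ ω) = ∫ y, f' y * h' y ∂(κ ω) :=
          integral_congr_ae (hfe.mul hhe)
      _ = (∫ y, f' y ∂(κ ω)) * ∫ y, h' y ∂(κ ω) :=
          IndepFun.integral_fun_mul_eq_mul_integral hIndep hfi'.1 hhi'.1
      _ = (∫ y, f y ∂(κ ω)) * ∫ y, h y ∂(κ ω) := by
          rw [integral_congr_ae hfe, integral_congr_ae hhe]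
  have c1 := condExp_ae_eq_integral_condExpKernel hm hfh
  have c2 := condExp_ae_eq_integral_condExpKernel hm hf
  have c3 := condExp_ae_eq_integral_condExpKernel hm hh
  filter_upwards [c1, c2, c3, key] with ω e1 e2 e3 e4
  rw [e1, e2, e3]
  exact e4

/-- If `0 = β(x, w₁) = ⋯ = β(x, w_G)` and treatment assignment is ignorable
given `x` with aliasing by `β`, then for any two groups `g, g'`,
`E[r g - r g' | x] = E[R | Z g = 1, x] - E[R | Z g' = 1, x]`, where
`E[R | Z g = 1, x] = E[Z g • R | x] / E[Z g | x]`. -/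
theorem stmt_12
    {Ω : Type*} [MeasurableSpace Ω] [StandardBorelSpace Ω]
    {X : Type*} [MeasurableSpace X] {W : Type*}
    (μ : Measure Ω) [IsProbabilityMeasure μ]
    (G : ℕ) (Z : Fin G → Ω → ℝ) (r : Fin G → Ω → ℝ) (x : Ω → X)
    (w : Fin G → W) (β : X → W → ℝ)
    (hZ01 : ∀ g ω, Z g ω = 0 ∨ Z g ω = 1)
    (hZsum : ∀ ω, ∑ g, Z g ω = 1)
    (hx : Measurable x)
    -- the aliasing functions vanish: 0 = β(x, w₁) = ⋯ = β(x, w_G)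
    (hβ0 : ∀ (a : X) (g : Fin G), β a (w g) = 0)
    -- ignorability (i): Z ⟂ (r₁ - β(x,w₁), …, r_G - β(x,w_G)) | x
    (hCI : CondIndepFun (MeasurableSpace.comap x inferInstance) (hx.comap_le)
      (fun ω g => Z g ω) (fun ω g => r g ω - β (x ω) (w g)) μ)
    -- ignorability (ii): 0 < P(Z g = 1 | x) < 1 a.s.
    (hpos : ∀ g, ∀ᵐ ω ∂μ,
      0 < (μ[Z g | MeasurableSpace.comap x inferInstance]) ω ∧
        (μ[Z g | MeasurableSpace.comap x inferInstance]) ω < 1)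
    (hint : ∀ g, Integrable (r g) μ)
    (g g' : Fin G) :
    μ[fun ω => r g ω - r g' ω | MeasurableSpace.comap x inferInstance]
      =ᵐ[μ] fun ω =>
        (μ[fun ω' => Z g ω' * (∑ g'', Z g'' ω' * r g'' ω') |
            MeasurableSpace.comap x inferInstance]) ω /
          (μ[Z g | MeasurableSpace.comap x inferInstance]) ω -
        (μ[fun ω' => Z g' ω' * (∑ g'', Z g'' ω' * r g'' ω') |
            MeasurableSpace.comap x inferInstance]) ω /
          (μ[Z g' | MeasurableSpace.comap x inferInstance]) ω := by
  -- `Z a` is integrable (otherwise its conditional expectation would be `0`)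
  have hZint : ∀ a : Fin G, Integrable (Z a) μ := by
    intro a
    by_contra hni
    have h0 : μ[Z a | MeasurableSpace.comap x inferInstance] = 0 := condExp_of_not_integrable hni
    obtain ⟨ω, hω1, _⟩ := (hpos a).exists
    rw [h0] at hω1
    simp at hω1
  -- pointwise: Z a * R = Z a * r a
  have hZR : ∀ (a : Fin G) (ω : Ω), Z a ω * (∑ g'', Z g'' ω * r g'' ω) = Z a ω * r a ω := by
    intro a ω
    rcases hZ01 a ω with h0 | h1
    · simp [h0]
    · have hzero : ∀ b : Fin G, b ≠ a → Z b ω = 0 := by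
        intro b hb
        have hsum := hZsum ω
        rw [← Finset.add_sum_erase _ _ (Finset.mem_univ a), h1] at hsum
        have hers : ∑ c ∈ Finset.univ.erase a, Z c ω = 0 := by linarith
        have hnn : ∀ c ∈ Finset.univ.erase a, 0 ≤ Z c ω := by
          intro c _
          rcases hZ01 c ω with h | h <;> simp [h]
        exact (Finset.sum_eq_zero_iff_of_nonneg hnn).mp hers b
          (Finset.mem_erase.mpr ⟨hb, Finset.mem_univ b⟩)
      have hsum' : ∑ g'', Z g'' ω * r g'' ω = Z a ω * r a ω := by
        refine Finset.sum_eq_single a ?_ ?_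
        · intro b _ hb
          rw [hzero b hb, zero_mul]
        · intro hb
          exact absurd (Finset.mem_univ a) hb
      rw [hsum', h1, one_mul, one_mul]
  have hZRfun : ∀ a : Fin G,
      (fun ω => Z a ω * (∑ g'', Z g'' ω * r g'' ω)) = fun ω => Z a ω * r a ω :=
    fun a => funext (hZR a)
  -- conditional independence of the components `Z a` and `r a`
  have hCIa : ∀ a : Fin G,
      CondIndepFun (MeasurableSpace.comap x inferInstance) (hx.comap_le) (Z a) (r a) μ := by
    intro a
    have hc := hCI.comp (φ := fun v : Fin G → ℝ => v a) (ψ := fun v : Fin G → ℝ => v a)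
      (measurable_pi_apply (X := fun _ : Fin G => ℝ) a) (measurable_pi_apply (X := fun _ : Fin G => ℝ) a)
    have he1 : ((fun v : Fin G → ℝ => v a) ∘ fun ω g => Z g ω) = Z a := rfl
    have he2 : ((fun v : Fin G → ℝ => v a) ∘ fun ω g => r g ω - β (x ω) (w g)) = r a := by
      funext ω
      simp [Function.comp, hβ0]
    rw [he1, he2] at hc
    exact hc
  -- integrability of the products
  have hZr_int : ∀ a : Fin G, Integrable (fun ω => Z a ω * r a ω) μ := by
    intro a
    refine (hint a).bdd_mul (hZint a).1 (c := 1) (ae_of_all _ fun ω => ?_)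
    rcases hZ01 a ω with h | h <;> simp [h]
  -- the product formula
  have hmul : ∀ a : Fin G,
      μ[fun ω => Z a ω * (∑ g'', Z g'' ω * r g'' ω) | MeasurableSpace.comap x inferInstance]
        =ᵐ[μ] fun ω => (μ[Z a | MeasurableSpace.comap x inferInstance]) ω
          * (μ[r a | MeasurableSpace.comap x inferInstance]) ω := by
    intro a
    rw [hZRfun a]
    exact condexp_mul_of_condIndepFun_aux (hx.comap_le) μ (hCIa a) (hZint a) (hint a) (hZr_int a)
  -- quotient: E[Z a * R | x] / E[Z a | x] = E[r a | x] a.e.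
  have hdiv : ∀ a : Fin G,
      (fun ω => (μ[fun ω' => Z a ω' * (∑ g'', Z g'' ω' * r g'' ω') |
            MeasurableSpace.comap x inferInstance]) ω
          / (μ[Z a | MeasurableSpace.comap x inferInstance]) ω)
        =ᵐ[μ] μ[r a | MeasurableSpace.comap x inferInstance] := by
    intro a
    filter_upwards [hmul a, hpos a] with ω h1 h2
    rw [h1]
    exact mul_div_cancel_left₀ _ (ne_of_gt h2.1)
  -- conclude
  have hsub : μ[fun ω => r g ω - r g' ω | MeasurableSpace.comap x inferInstance]
      =ᵐ[μ] μ[r g | MeasurableSpace.comap x inferInstance]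
        - μ[r g' | MeasurableSpace.comap x inferInstance] :=
    condExp_sub (hint g) (hint g') _
  filter_upwards [hsub, hdiv g, hdiv g'] with ω e1 e2 e3
  rw [e1, Pi.sub_apply, ← e2, ← e3]
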